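/- (Reuter's Theorem) Let F₁ and F₀ be continuous, strictly increasing CDFs with F₁(y) < F₀(y) for all y in the interior of the union of their supports (strict stochastic dominance). Then there exists a strictly increasing function g : ℝ → ℝ and a constant τ such that for all p ∈ (0,1), g(F₁⁻¹(p)) - g(F₀⁻¹(p)) = τ; equivalently, the CDFs of g(Y(1)) and g(Y(0)) are parallel (a constant horizontal shift apart), where Y(1) ~ F₁ and Y(0) ~ F₀. -/

import Mathlib

open Set Function Filter Topology

/-- Reuter's Theorem: if `F₁`, `F₀` are continuous, strictly increasing CDFs
with strict stochastic dominance `F₁ y < F₀ y` everywhere, then there is a strictly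
increasing transformation `g` and a constant `τ` such that the quantile functions of the
transformed distributions differ by `τ` at every `p ∈ (0,1)`, i.e. the transformed CDFs
are parallel (a constant shift apart). -/
theorem stmt3 (F1 F0 : ℝ → ℝ)
    (hF1c : Continuous F1) (hF1m : StrictMono F1) (hF1r : range F1 = Ioo 0 1)
    (hF0c : Continuous F0) (hF0m : StrictMono F0) (hF0r : range F0 = Ioo 0 1)
    (hdom : ∀ y, F1 y < F0 y) :
    ∃ g : ℝ → ℝ, StrictMono g ∧
      ∃ τ : ℝ, ∀ p ∈ Ioo (0:ℝ) 1, g (invFun F1 p) - g (invFun F0 p) = τ := by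
  classical
  -- the "vertical shift" map φ = F0⁻¹ ∘ F1
  set φ : ℝ → ℝ := fun y => invFun F0 (F1 y) with hφdef
  have hF1mem : ∀ y, F1 y ∈ Ioo (0:ℝ) 1 := fun y => hF1r ▸ mem_range_self y
  have hF0mem : ∀ y, F0 y ∈ Ioo (0:ℝ) 1 := fun y => hF0r ▸ mem_range_self y
  have hF0inv : ∀ q ∈ Ioo (0:ℝ) 1, F0 (invFun F0 q) = q := by
    intro q hq
    exact invFun_eq (by rw [← hF0r] at hq; exact hq)
  have hF1inv : ∀ q ∈ Ioo (0:ℝ) 1, F1 (invFun F1 q) = q := by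
    intro q hq
    exact invFun_eq (by rw [← hF1r] at hq; exact hq)
  have hφeq : ∀ y, F0 (φ y) = F1 y := fun y => hF0inv _ (hF1mem y)
  have hφlt : ∀ y, φ y < y := by
    intro y
    have h := hdom y
    rw [← hφeq y] at h
    exact hF0m.lt_iff_lt.mp h
  have hφm : StrictMono φ := by
    intro a b hab
    have : F0 (φ a) < F0 (φ b) := by rw [hφeq, hφeq]; exact hF1m hab
    exact hF0m.lt_iff_lt.mp this
  have hφsurj : Surjective φ := by
    intro z
    refine ⟨invFun F1 (F0 z), ?_⟩
    have h1 : F1 (invFun F1 (F0 z)) = F0 z := hF1inv _ (hF0mem z)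
    show invFun F0 (F1 (invFun F1 (F0 z))) = z
    rw [h1]
    exact leftInverse_invFun hF0m.injective z
  -- φ as an order isomorphism of ℝ, hence continuous, with continuous inverse
  set H : ℝ ≃o ℝ := StrictMono.orderIsoOfSurjective φ hφm hφsurj with hHdef
  have hHcoe : ∀ y, H y = φ y := fun _ => rfl
  have hφc : Continuous φ := by
    have := H.continuous
    exact this
  set ψ : ℝ → ℝ := fun y => H.symm y with hψdef
  have hψc : Continuous ψ := H.symm.continuous
  have hψm : StrictMono ψ := H.symm.strictMono
  have hφψ : ∀ y, φ (ψ y) = y := fun y => H.apply_symm_apply y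
  have hψφ : ∀ y, ψ (φ y) = y := fun y => H.symm_apply_apply y
  have hψgt : ∀ y, y < ψ y := by
    intro y
    have := hφlt (ψ y)
    rwa [hφψ] at this
  -- integer iterates of φ
  set E : Equiv.Perm ℝ := H.toEquiv with hEdef
  set P : ℤ → ℝ → ℝ := fun n y => (E ^ n) y with hPdef
  have hEapp : ∀ y, E y = φ y := fun _ => rfl
  have hEinv : ∀ y, E⁻¹ y = ψ y := fun _ => rfl
  have hP0 : ∀ y, P 0 y = y := by intro y; simp [hPdef]
  have hPsucc : ∀ (n : ℤ) (y), P (n + 1) y = φ (P n y) := by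
    intro n y
    have h : E ^ (n + 1) = E * E ^ n := by rw [add_comm, zpow_one_add]
    show (E ^ (n + 1)) y = φ ((E ^ n) y)
    rw [h, Equiv.Perm.mul_apply, hEapp]
  have hPsucc' : ∀ (n : ℤ) (y), P (n + 1) y = P n (φ y) := by
    intro n y
    have h : E ^ (n + 1) = E ^ n * E := zpow_add_one E n
    show (E ^ (n + 1)) y = (E ^ n) (φ y)
    rw [h, Equiv.Perm.mul_apply, hEapp]
  have hPpred : ∀ (n : ℤ) (y), P (n - 1) y = ψ (P n y) := by
    intro n y
    have h : E ^ (n - 1) = E⁻¹ * E ^ n := by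
      rw [sub_eq_neg_add, zpow_add, zpow_neg_one]
    show (E ^ (n - 1)) y = ψ ((E ^ n) y)
    rw [h, Equiv.Perm.mul_apply, hEinv]
  have hPmono : ∀ n : ℤ, StrictMono (P n) := by
    intro n
    induction n using Int.induction_on with
    | zero => intro a b hab; simpa [hP0] using hab
    | succ k ih => intro a b hab; rw [hPsucc, hPsucc]; exact hφm (ih hab)
    | pred k ih =>
        intro a b hab
        have h1 : P (-(k : ℤ) - 1) a = ψ (P (-(k : ℤ)) a) := hPpred _ _
        have h2 : P (-(k : ℤ) - 1) b = ψ (P (-(k : ℤ)) b) := hPpred _ _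
        rw [h1, h2]
        exact hψm (ih hab)
  have hPanti : ∀ y, StrictAnti (fun k : ℤ => P k y) := by
    intro y
    apply strictAnti_int_of_succ_lt
    intro n
    rw [hPsucc]
    exact hφlt _
  -- iterates tend to -∞ forward and +∞ backward
  have hdown : ∀ y, Tendsto (fun n : ℕ => P n y) atTop atBot := by
    intro y
    set a : ℕ → ℝ := fun n => P n y with hadef
    have ha : ∀ n : ℕ, a (n + 1) = φ (a n) := by
      intro n
      have : ((n : ℤ) + 1) = ((n + 1 : ℕ) : ℤ) := by push_cast; ring
      rw [hadef]
      simp only [← this, hPsucc]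
    have hanti : Antitone a := antitone_nat_of_succ_le fun n => by
      rw [ha]; exact (hφlt _).le
    by_cases hb : BddBelow (Set.range a)
    · exfalso
      have hlim := tendsto_atTop_ciInf hanti hb
      set L := ⨅ n, a n with hL
      have h1 : Tendsto (fun n => φ (a n)) atTop (𝓝 (φ L)) :=
        (hφc.tendsto L).comp hlim
      have h1' : Tendsto (fun n => a (n + 1)) atTop (𝓝 (φ L)) := by
        simpa [ha] using h1
      have h2 : Tendsto (fun n => a (n + 1)) atTop (𝓝 L) :=
        hlim.comp (tendsto_add_atTop_nat 1)
      have : φ L = L := tendsto_nhds_unique h1' h2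
      exact absurd this (ne_of_lt (hφlt L))
    · apply tendsto_atTop_atBot_of_antitone hanti
      intro b
      rcases not_bddBelow_iff.1 hb b with ⟨_, ⟨N, rfl⟩, hN⟩
      exact ⟨N, hN.le⟩
  have hup : ∀ y, Tendsto (fun n : ℕ => P (-n) y) atTop atTop := by
    intro y
    set a : ℕ → ℝ := fun n => P (-n) y with hadef
    have ha : ∀ n : ℕ, a (n + 1) = ψ (a n) := by
      intro n
      have : (-(n : ℤ) - 1) = -((n + 1 : ℕ) : ℤ) := by push_cast; ring
      rw [hadef]
      simp only [← this, hPpred]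
    have hmono : Monotone a := monotone_nat_of_le_succ fun n => by
      rw [ha]; exact (hψgt _).le
    by_cases hb : BddAbove (Set.range a)
    · exfalso
      have hlim := tendsto_atTop_ciSup hmono hb
      set L := ⨆ n, a n with hL
      have h1 : Tendsto (fun n => ψ (a n)) atTop (𝓝 (ψ L)) :=
        (hψc.tendsto L).comp hlim
      have h1' : Tendsto (fun n => a (n + 1)) atTop (𝓝 (ψ L)) := by
        simpa [ha] using h1
      have h2 : Tendsto (fun n => a (n + 1)) atTop (𝓝 L) :=
        hlim.comp (tendsto_add_atTop_nat 1)
      have : ψ L = L := tendsto_nhds_unique h1' h2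
      exact absurd this (ne_of_gt (hψgt L))
    · apply tendsto_atTop_atTop_of_monotone' hmono hb
  -- existence of the "level" of y : the unique k with P k y ∈ [φ 0, 0)
  have hex : ∀ y, ∃ k : ℤ, P k y ∈ Ico (φ 0) 0 := by
    intro y
    have hne : ∃ k : ℤ, P k y < 0 := by
      obtain ⟨n, hn⟩ := ((hdown y).eventually (eventually_lt_atBot (0:ℝ))).exists
      exact ⟨n, hn⟩
    have hbdd : ∃ b : ℤ, ∀ z : ℤ, P z y < 0 → b ≤ z := by
      obtain ⟨n, hn⟩ := ((hup y).eventually (eventually_ge_atTop (0:ℝ))).exists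
      refine ⟨-(n : ℤ), fun z hz => ?_⟩
      by_contra hle
      push_neg at hle
      have : P (-(n:ℤ)) y ≤ P z y := (hPanti y).antitone hle.le
      linarith
    obtain ⟨lb, hlb, hmin⟩ := Int.exists_least_of_bdd hbdd hne
    refine ⟨lb, ?_, hlb⟩
    have hnot : ¬ P (lb - 1) y < 0 := by
      intro h
      have := hmin _ h
      omega
    push_neg at hnot
    have : φ 0 ≤ φ (P (lb - 1) y) := hφm.monotone hnot
    have heq : P (lb - 1 + 1) y = φ (P (lb - 1) y) := hPsucc _ _
    rw [sub_add_cancel] at heq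
    rw [heq]
    exact this
  have huniq : ∀ y (k1 k2 : ℤ), P k1 y ∈ Ico (φ 0) 0 → P k2 y ∈ Ico (φ 0) 0 → k1 = k2 := by
    have key : ∀ y (k1 k2 : ℤ), k1 < k2 → P k1 y ∈ Ico (φ 0) 0 →
        P k2 y ∈ Ico (φ 0) 0 → False := by
      intro y k1 k2 hk h1 h2
      have hle : P k2 y ≤ P (k1 + 1) y := (hPanti y).antitone (by omega)
      have : P (k1 + 1) y = φ (P k1 y) := hPsucc _ _
      have hlt : φ (P k1 y) < φ 0 := hφm h1.2
      have := h2.1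
      linarith
    intro y k1 k2 h1 h2
    rcases lt_trichotomy k1 k2 with h | h | h
    · exact absurd (key y k1 k2 h h1 h2) (fun x => x)
    · exact h
    · exact absurd (key y k2 k1 h h2 h1) (fun x => x)
  set m : ℝ → ℤ := fun y => Classical.choose (hex y) with hmdef
  have hm : ∀ y, P (m y) y ∈ Ico (φ 0) 0 := fun y => Classical.choose_spec (hex y)
  -- shift property of m along φ
  have hshift : ∀ y, m (φ y) = m y - 1 ∧ P (m (φ y)) (φ y) = P (m y) y := by
    intro y
    have heq : P (m y - 1) (φ y) = P (m y) y := by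
      have := hPsucc' (m y - 1) y
      rw [sub_add_cancel] at this
      exact this.symm
    have hmem : P (m y - 1) (φ y) ∈ Ico (φ 0) 0 := heq ▸ hm y
    have h1 : m (φ y) = m y - 1 := huniq (φ y) _ _ (hm (φ y)) hmem
    exact ⟨h1, by rw [h1, heq]⟩
  -- monotonicity of m
  have hmm : ∀ y y', y < y' → m y ≤ m y' := by
    intro y y' hy
    by_contra hlt
    push_neg at hlt
    have h1 : P (m y) y ≤ P (m y' + 1) y := (hPanti y).antitone (by omega)
    have h2 : P (m y' + 1) y = φ (P (m y') y) := hPsucc _ _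
    have h3 : P (m y') y ≤ P (m y') y' := (hPmono (m y')).monotone hy.le
    have h4 : P (m y') y < 0 := lt_of_le_of_lt h3 (hm y').2
    have h5 : φ (P (m y') y) < φ 0 := hφm h4
    have h6 := (hm y).1
    linarith
  -- the transformation g
    -- c > 0
  have hc0 : φ 0 < 0 := hφlt 0
  set c : ℝ := 0 - φ 0 with hcdef
  have hc : 0 < c := by simp [hcdef]; linarith
  set g : ℝ → ℝ := fun y => (m y : ℝ) + (P (m y) y - φ 0) / c with hgdef
  have hfrac_lo : ∀ y, 0 ≤ (P (m y) y - φ 0) / c := by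
    intro y
    apply div_nonneg _ hc.le
    have := (hm y).1
    linarith
  have hfrac_hi : ∀ y, (P (m y) y - φ 0) / c < 1 := by
    intro y
    rw [div_lt_one hc]
    have := (hm y).2
    simp [hcdef]
    linarith
  have hgm : StrictMono g := by
    intro y y' hy
    rcases eq_or_lt_of_le (hmm y y' hy) with heq | hlt
    · have hP : P (m y) y < P (m y) y' := hPmono (m y) hy
      rw [hgdef]
      simp only
      rw [← heq]
      have : (P (m y) y - φ 0) / c < (P (m y) y' - φ 0) / c := by
        rw [div_lt_div_iff_of_pos_right hc]
        linarith
      linarith [this]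
    · have h1 : g y < (m y : ℝ) + 1 := by
        rw [hgdef]; simp only; linarith [hfrac_hi y]
      have h2 : ((m y : ℝ) + 1) ≤ (m y' : ℝ) := by
        have : m y + 1 ≤ m y' := hlt
        exact_mod_cast this
      have h3 : (m y' : ℝ) ≤ g y' := by
        rw [hgdef]; simp only; linarith [hfrac_lo y']
      linarith
  refine ⟨g, hgm, 1, ?_⟩
  intro p hp
  set y1 : ℝ := invFun F1 p with hy1def
  set y0 : ℝ := invFun F0 p with hy0def
  have hF1y1 : F1 y1 = p := hF1inv p hp
  have hphi : φ y1 = y0 := by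
    rw [hφdef]
    simp only
    rw [hF1y1]
  obtain ⟨hs1, hs2⟩ := hshift y1
  rw [hphi] at hs1 hs2
  rw [hgdef]
  simp only
  rw [hs2, hs1]
  push_cast
  ring
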